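/- If a₁,…,a_q > 0 with ∑ᵢ aᵢ ≥ q and aᵢ ≤ 1 for all 2 ≤ i ≤ q, then g_{a₁,…,a_q} is convex on [0,1] and consequently g'_{a₁,…,a_q}(u) ≤ g'_{a₁,…,a_q}(1) = a₁ for all u ∈ [0,1]. -/

import Mathlib

def IsGood (f : ℝ → ℝ) : Prop :=
  ConvexOn ℝ (Set.Icc (0:ℝ) 1) f ∧ MonotoneOn f (Set.Icc (0:ℝ) 1) ∧
    ∀ x ∈ Set.Icc (0:ℝ) 1, 0 ≤ f x

lemma isGood_mul {f h : ℝ → ℝ} (hf : IsGood f) (hh : IsGood h) :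
    IsGood (fun x => f x * h x) := by
  obtain ⟨hf1, hf2, hf3⟩ := hf
  obtain ⟨hh1, hh2, hh3⟩ := hh
  refine ⟨?_, ?_, ?_⟩
  · exact hf1.mul hh1 (fun x hx => hf3 x hx) (fun x hx => hh3 x hx) (hf2.monovaryOn hh2)
  · intro x hx y hy hxy
    exact mul_le_mul (hf2 hx hy hxy) (hh2 hx hy hxy) (hh3 x hx) (hf3 y hy)
  · intro x hx; exact mul_nonneg (hf3 x hx) (hh3 x hx)

lemma isGood_const (c : ℝ) (hc : 0 ≤ c) : IsGood (fun _ => c) :=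
  ⟨convexOn_const c (convex_Icc 0 1), monotoneOn_const, fun _ _ => hc⟩

lemma isGood_affine (c d : ℝ) (hc : 0 ≤ c) (hd : 0 ≤ d) :
    IsGood (fun x => c + d * x) := by
  refine ⟨⟨convex_Icc 0 1, ?_⟩, ?_, ?_⟩
  · intro x hx y hy a b ha hb hab
    simp only [smul_eq_mul]
    apply le_of_eq
    linear_combination (-c) * hab
  · intro x hx y hy hxy
    have := mul_le_mul_of_nonneg_left hxy hd
    dsimp only
    linarith
  · intro x hx
    have := mul_nonneg hd hx.1
    dsimp only
    linarith

lemma isGood_pow {f : ℝ → ℝ} (hf : IsGood f) (n : ℕ) : IsGood (fun x => f x ^ n) := by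
  induction n with
  | zero => simpa using isGood_const 1 zero_le_one
  | succ n ih =>
    simp only [pow_succ]
    exact isGood_mul ih hf

lemma isGood_prod {ι : Type*} (t : Finset ι) (f : ι → ℝ → ℝ)
    (h : ∀ i ∈ t, IsGood (f i)) : IsGood (fun x => ∏ i ∈ t, f i x) := by
  classical
  induction t using Finset.cons_induction with
  | empty => simpa using isGood_const 1 zero_le_one
  | cons i t hit ih =>
    simp only [Finset.prod_cons]
    exact isGood_mul (h i (Finset.mem_cons_self i t)) (ih fun j hj => h j (Finset.mem_cons_of_mem hj))

lemma isGood_inv_affine (c d : ℝ) (hd : 0 ≤ d) (hpos : (0:ℝ) < c - d) :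
    IsGood (fun x => (c - d * x)⁻¹) := by
  have hpx : ∀ x ∈ Set.Icc (0:ℝ) 1, 0 < c - d * x := by
    intro x hx
    nlinarith [hx.1, hx.2]
  refine ⟨⟨convex_Icc 0 1, ?_⟩, ?_, ?_⟩
  · intro x hx y hy a b ha hb hab
    have hz := convexOn_zpow (𝕜 := ℝ) (-1)
    have h2 := hz.2 (Set.mem_Ioi.2 (hpx x hx)) (Set.mem_Ioi.2 (hpx y hy)) ha hb hab
    simp only [smul_eq_mul, zpow_neg, zpow_one] at h2 ⊢
    have key : c - d * (a * x + b * y) = a * (c - d * x) + b * (c - d * y) := by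
      linear_combination (-c) * hab
    rw [key]
    exact h2
  · intro x hx y hy hxy
    have h1 : c - d * y ≤ c - d * x := by
      have := mul_le_mul_of_nonneg_left hxy hd
      linarith
    exact inv_anti₀ (hpx y hy) h1
  · intro x hx
    exact (inv_nonneg).2 (hpx x hx).le

noncomputable def g (q : ℕ) (a : ℕ → ℝ) (u : ℝ) : ℝ :=
  (q : ℝ) ^ q * u * (∏ i ∈ Finset.Icc 2 q, (a i + u - a i * u)) /
    ((∑ i ∈ Finset.Icc 1 q, a i) - ((∑ i ∈ Finset.Icc 1 q, a i) - q) * u) ^ q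

theorem stmt_11 (q : ℕ) (hq : 1 ≤ q) (a : ℕ → ℝ)
    (ha : ∀ i ∈ Finset.Icc 1 q, 0 < a i)
    (hsum : (q : ℝ) ≤ ∑ i ∈ Finset.Icc 1 q, a i)
    (hle : ∀ i ∈ Finset.Icc 2 q, a i ≤ 1) :
    ConvexOn ℝ (Set.Icc (0:ℝ) 1) (g q a) ∧
    (∀ u ∈ Set.Icc (0:ℝ) 1, deriv (g q a) u ≤ deriv (g q a) 1) ∧
    deriv (g q a) 1 = a 1 := by
  have hq0 : (0:ℝ) < q := by exact_mod_cast hq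
  set S := ∑ i ∈ Finset.Icc 1 q, a i with hS
  have hd : (0:ℝ) ≤ S - q := sub_nonneg.2 hsum
  have hgq : g q a = fun u : ℝ =>
      (q : ℝ) ^ q * u * (∏ i ∈ Finset.Icc 2 q, (a i + u - a i * u)) /
        (S - (S - q) * u) ^ q := rfl
  -- convexity
  have gid : IsGood (fun u : ℝ => u) := by
    have := isGood_affine 0 1 le_rfl zero_le_one
    simpa using this
  have gP : IsGood (fun u : ℝ => ∏ i ∈ Finset.Icc 2 q, (a i + u - a i * u)) := by
    apply isGood_prod
    intro i hi
    have hi1 : i ∈ Finset.Icc 1 q := by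
      simp only [Finset.mem_Icc] at hi ⊢; omega
    have h := isGood_affine (a i) (1 - a i) (ha i hi1).le (by linarith [hle i hi])
    have he : (fun u : ℝ => a i + u - a i * u) = (fun u : ℝ => a i + (1 - a i) * u) := by
      funext u; ring
    rw [he]; exact h
  have gDinv : IsGood (fun u : ℝ => (S - (S - q) * u)⁻¹) :=
    isGood_inv_affine S (S - q) hd (by linarith)
  have gF : IsGood (fun u : ℝ => (q:ℝ)^q *
      (u * ((∏ i ∈ Finset.Icc 2 q, (a i + u - a i * u)) * ((S - (S - q) * u)⁻¹) ^ q))) :=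
    isGood_mul (isGood_const _ (by positivity))
      (isGood_mul gid (isGood_mul gP (isGood_pow gDinv q)))
  have hfeq : (fun u : ℝ => (q : ℝ) ^ q * u * (∏ i ∈ Finset.Icc 2 q, (a i + u - a i * u)) /
        (S - (S - q) * u) ^ q) = (fun u : ℝ => (q:ℝ)^q *
      (u * ((∏ i ∈ Finset.Icc 2 q, (a i + u - a i * u)) * ((S - (S - q) * u)⁻¹) ^ q))) := by
    funext u
    rw [div_eq_mul_inv, ← inv_pow]
    ring
  have hconv : ConvexOn ℝ (Set.Icc (0:ℝ) 1) (g q a) := by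
    rw [hgq, hfeq]; exact gF.1
  -- positivity of denominator
  have hDpos : ∀ x ∈ Set.Icc (0:ℝ) 1, 0 < S - (S - q) * x := by
    intro x hx
    nlinarith [hx.1, hx.2]
  -- differentiability
  have hdiff : ∀ x ∈ Set.Icc (0:ℝ) 1, DifferentiableAt ℝ (g q a) x := by
    intro x hx
    rw [hgq]
    apply DifferentiableAt.div
    · apply DifferentiableAt.mul
      · fun_prop
      · apply DifferentiableAt.fun_finsetProd
        intro i _
        fun_prop
    · fun_prop
    · exact pow_ne_zero _ (hDpos x hx).ne'
  have hone : (1:ℝ) ∈ Set.Icc (0:ℝ) 1 := Set.right_mem_Icc.2 zero_le_one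
  have hmono := hconv.monotoneOn_deriv hdiff
  refine ⟨hconv, fun u hu => hmono hu hone hu.2, ?_⟩
  -- derivative at 1
  have hPi : ∀ i ∈ Finset.Icc 2 q, HasDerivAt (fun u : ℝ => a i + u - a i * u) (1 - a i) 1 := by
    intro i _
    have h1 := (((hasDerivAt_id (1:ℝ)).const_add (a i)).fun_sub ((hasDerivAt_id (1:ℝ)).const_mul (a i)))
    simpa using h1
  have hPd := HasDerivAt.fun_finsetProd hPi
  have hTe : (∑ i ∈ Finset.Icc 2 q, (∏ j ∈ (Finset.Icc 2 q).erase i, (a j + 1 - a j * 1)) • (1 - a i))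
      = ∑ i ∈ Finset.Icc 2 q, (1 - a i) := by
    refine Finset.sum_congr rfl fun i hi => ?_
    rw [Finset.prod_eq_one fun j hj => by ring, one_smul]
  rw [hTe] at hPd
  have hPd' : HasDerivAt (fun u : ℝ => ∏ i ∈ Finset.Icc 2 q, (a i + u - a i * u))
      (∑ i ∈ Finset.Icc 2 q, (1 - a i)) 1 := hPd
  have hNd := (((hasDerivAt_id (1:ℝ)).const_mul ((q:ℝ)^q)).mul hPd')
  have hD0 : HasDerivAt (fun u : ℝ => S - (S - q) * u) (-(S - q)) 1 := by
    have h1 := ((hasDerivAt_const (1:ℝ) S).fun_sub ((hasDerivAt_id (1:ℝ)).const_mul (S - q)))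
    simpa using h1
  have hDd := hD0.pow q
  have hne : (S - (S - q) * 1) ^ q ≠ 0 := pow_ne_zero _ (hDpos 1 hone).ne'
  have hgd := hNd.div hDd hne
  have hgd' : HasDerivAt (fun u : ℝ =>
      (q : ℝ) ^ q * u * (∏ i ∈ Finset.Icc 2 q, (a i + u - a i * u)) / (S - (S - q) * u) ^ q)
      ((((q:ℝ)^q * 1 * ∏ i ∈ Finset.Icc 2 q, (a i + 1 - a i * 1) +
          (q:ℝ)^q * 1 * ∑ i ∈ Finset.Icc 2 q, (1 - a i)) * (S - (S - q) * 1) ^ q -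
        (q:ℝ)^q * 1 * (∏ i ∈ Finset.Icc 2 q, (a i + 1 - a i * 1)) *
          ((q:ℝ) * (S - (S - q) * 1) ^ (q - 1) * -(S - q))) / ((S - (S - q) * 1) ^ q) ^ 2) 1 := hgd
  have hP1 : (∏ i ∈ Finset.Icc 2 q, (a i + 1 - a i * 1)) = 1 :=
    Finset.prod_eq_one fun i _ => by ring
  have hsplit : S = a 1 + ∑ i ∈ Finset.Icc 2 q, a i := by
    rw [hS, show Finset.Icc 1 q = insert 1 (Finset.Icc 2 q) by
      ext i; simp only [Finset.mem_Icc, Finset.mem_insert]; omega,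
      Finset.sum_insert (by simp)]
  have hTval : (∑ i ∈ Finset.Icc 2 q, (1 - a i)) = ((q:ℝ) - 1) - (S - a 1) := by
    rw [Finset.sum_sub_distrib, Finset.sum_const, Nat.card_Icc, nsmul_eq_mul]
    have h2 : ((q + 1 - 2 : ℕ) : ℝ) = (q:ℝ) - 1 := by
      have h3 : q + 1 - 2 = q - 1 := by omega
      rw [h3, Nat.cast_sub hq]; norm_num
    rw [h2]; linarith [hsplit]
  have hcast : (q:ℝ) * (q:ℝ)^(q-1) = (q:ℝ)^q := by
    rw [← pow_succ']
    congr 1; omega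
  rw [hgq, hgd'.deriv, hP1, hTval, show S - (S - (q:ℝ)) * 1 = (q:ℝ) from by ring, hcast]
  have hqq : ((q:ℝ)^q) ≠ 0 := by positivity
  field_simp
  ring
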